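/- Let H = {z ∈ ℂ : Re z > 0} and suppose g : ℂ \ (-∞,0] → ℂ satisfies Re(ζ¹ g(ζ²/ζ¹)) ≥ 0 for all ζ¹, ζ² ∈ H. Then the set {ζ²/ζ¹ : ζ¹, ζ² ∈ H} equals ℂ \ (-∞,0], and the function h(z) = -g(z)/z maps the upper half-plane into its closure, i.e., Im h(z) ≥ 0 whenever Im z > 0. -/

import Mathlib

open Complex

theorem quotient_halfplane_and_pick (g : ℂ → ℂ)
    (hg : ∀ ζ1 ζ2 : ℂ, 0 < ζ1.re → 0 < ζ2.re → 0 ≤ (ζ1 * g (ζ2 / ζ1)).re) :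
    {z : ℂ | ∃ ζ1 ζ2 : ℂ, 0 < ζ1.re ∧ 0 < ζ2.re ∧ z = ζ2 / ζ1} = Complex.slitPlane ∧
    ∀ z : ℂ, 0 < z.im → 0 ≤ (-g z / z).im := by
  constructor
  · ext z
    simp only [Set.mem_setOf_eq, Complex.mem_slitPlane_iff]
    constructor
    · rintro ⟨ζ1, ζ2, h1, h2, rfl⟩
      by_contra h
      push_neg at h
      obtain ⟨hre, him⟩ := h
      have hζ1 : ζ1 ≠ 0 := fun h0 => by simp [h0] at h1
      have hz : ζ2 = (ζ2 / ζ1) * ζ1 := (div_mul_cancel₀ ζ2 hζ1).symm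
      have : ζ2.re = (ζ2 / ζ1).re * ζ1.re - (ζ2 / ζ1).im * ζ1.im := by
        conv_lhs => rw [hz]
        simp [Complex.mul_re]
      rw [him] at this
      nlinarith
    · intro hz
      have hzne : z ≠ 0 := by
        rintro rfl; simp at hz
      have habs : (0:ℝ) < ‖z‖ := norm_pos_iff.2 hzne
      have hre1 : 0 < ‖z‖ + z.re := by
        rcases hz with h | h
        · have := Complex.abs_re_le_norm z
          have h2 : |z.re| ≤ ‖z‖ := Complex.abs_re_le_norm z
          nlinarith [abs_nonneg z.re, le_abs_self z.re, neg_abs_le z.re]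
        · have h2 : |z.re| < ‖z‖ := (Complex.abs_re_lt_norm).2 h
          have := neg_abs_le z.re
          linarith
      refine ⟨(‖z‖ : ℂ) + (starRingEnd ℂ) z, z * ((‖z‖ : ℂ) + (starRingEnd ℂ) z), ?_, ?_, ?_⟩
      · simpa using hre1
      · have : (z * ((‖z‖ : ℂ) + (starRingEnd ℂ) z)).re
            = ‖z‖ * z.re + (‖z‖)^2 := by
          simp [Complex.mul_re, Complex.add_re, Complex.add_im]
          nlinarith [Complex.sq_norm z, Complex.normSq_apply z]
        rw [this]
        nlinarith
      · have hne : (‖z‖ : ℂ) + (starRingEnd ℂ) z ≠ 0 := by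
          intro h0
          have : ((‖z‖ : ℂ) + (starRingEnd ℂ) z).re = 0 := by rw [h0]; simp
          simp at this
          linarith
        rw [mul_div_assoc, div_self hne, mul_one]
  · intro z hz
    set w := g z with hw
    have key : ∀ a b : ℝ, 0 < a → 0 < z.re * a - z.im * b →
        0 ≤ a * w.re - b * w.im := by
      intro a b ha hab
      set ζ1 : ℂ := ⟨a, b⟩ with hζ1
      have hζ1ne : ζ1 ≠ 0 := by
        intro h0
        have : ζ1.re = 0 := by rw [h0]; simp
        simp [hζ1] at this; linarith
      have h1 : (0:ℝ) < ζ1.re := ha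
      have h2 : (0:ℝ) < (z * ζ1).re := by
        simp [Complex.mul_re, hζ1]
        linarith
      have := hg ζ1 (z * ζ1) h1 h2
      rw [mul_div_assoc, div_self hζ1ne, mul_one] at this
      simpa [Complex.mul_re, hζ1, ← hw] using this
    have him : 0 ≤ w.im := by
      by_contra h
      push_neg at h
      set t : ℝ := max ((1 - z.re)/z.im) ((w.re + 1)/(-w.im)) with ht
      have h1 : 0 < z.re * 1 - z.im * (-t) := by
        have : (1 - z.re)/z.im ≤ t := le_max_left _ _
        have := (div_le_iff₀ hz).1 this
        nlinarith
      have h2 := key 1 (-t) one_pos h1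
      have h3 : (w.re + 1)/(-w.im) ≤ t := le_max_right _ _
      have h4 := (div_le_iff₀ (by linarith : (0:ℝ) < -w.im)).1 h3
      nlinarith
    have main : 0 ≤ z.im * w.re - z.re * w.im := by
      rcases eq_or_lt_of_le him with heq | hpos
      · have := key z.im (z.re - 1) hz (by nlinarith)
        nlinarith
      · by_contra h
        push_neg at h
        set ε : ℝ := (z.re * w.im - z.im * w.re)/(2 * w.im) with hε
        have hεpos : 0 < ε := by
          apply div_pos (by linarith) (by linarith)
        have hcond : 0 < z.re * z.im - z.im * (z.re - ε) := by
          have : z.re * z.im - z.im * (z.re - ε) = z.im * ε := by ring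
          rw [this]; positivity
        have := key z.im (z.re - ε) hz hcond
        have hε2 : ε * w.im = (z.re * w.im - z.im * w.re)/2 := by
          rw [hε]; field_simp
        nlinarith
    have hzne : z ≠ 0 := by
      intro h0; rw [h0] at hz; simp at hz
    rw [Complex.div_im]
    have hnsq : 0 < Complex.normSq z := Complex.normSq_pos.2 hzne
    simp only [Complex.neg_im, Complex.neg_re]
    rw [div_sub_div_same]
    apply div_nonneg _ (le_of_lt hnsq)
    linarith
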